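/- Let X be a nonempty set, p a partial metric on X, and {x_n}, {y_n} two sequences in X such that p(x_n, y_n) → 0 as n → ∞. If {x_n} is rough statistically convergent to x with roughness degree r ≥ 0 and the self-distances satisfy p(x_n, x_n) → 0 as n → ∞, then {y_n} is rough statistically convergent to x with the same roughness degree r. -/

import Mathlib

/-- A partial metric on a set `X`. -/
structure IsPartialMetric {X : Type*} (p : X → X → ℝ) : Prop where
  nonneg : ∀ x y : X, 0 ≤ p x y
  self_le : ∀ x y : X, p x x ≤ p x y
  eq_iff : ∀ x y : X, x = y ↔ p x x = p x y ∧ p x y = p y y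
  symm : ∀ x y : X, p x y = p y x
  triangle : ∀ x y z : X, p x y ≤ p x z + p z y - p z z

open Classical in
/-- `A ⊆ ℕ` has natural density `d`. -/
def HasNatDensity (A : Set ℕ) (d : ℝ) : Prop :=
  Filter.Tendsto
    (fun n : ℕ => (((Finset.range n).filter (fun k => k ∈ A)).card : ℝ) / (n : ℝ))
    Filter.atTop (nhds d)

/-- `l` is a rough statistical limit point of the sequence `x` with roughness degree `r`,
i.e. `l ∈ st-LIM^r x_n`. -/
def RStatLimit {X : Type*} (p : X → X → ℝ) (x : ℕ → X) (r : ℝ) (l : X) : Prop :=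
  ∀ ε : ℝ, 0 < ε → HasNatDensity {n : ℕ | r + ε ≤ |p (x n) l - p l l|} 0


open Classical in
lemma density_zero_of_subset_union {A B : Set ℕ} (N : ℕ)
    (h : ∀ n, n ∈ A → n ∈ B ∨ n < N) (hB : HasNatDensity B 0) :
    HasNatDensity A 0 := by
  unfold HasNatDensity at *
  have hle : ∀ n : ℕ,
      (((Finset.range n).filter (fun k => k ∈ A)).card : ℝ) / (n : ℝ) ≤
      (((Finset.range n).filter (fun k => k ∈ B)).card : ℝ) / (n : ℝ) + (N : ℝ) / (n : ℝ) := by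
    intro n
    rcases Nat.eq_zero_or_pos n with h0 | hn
    · simp [h0]
    have hsub : (Finset.range n).filter (fun k => k ∈ A) ⊆
        ((Finset.range n).filter (fun k => k ∈ B)) ∪ Finset.range N := by
      intro k hk
      simp only [Finset.mem_filter, Finset.mem_union, Finset.mem_range] at hk ⊢
      rcases h k hk.2 with hB' | hN
      · exact Or.inl ⟨hk.1, hB'⟩
      · exact Or.inr hN
    have hcard : ((Finset.range n).filter (fun k => k ∈ A)).card ≤
        ((Finset.range n).filter (fun k => k ∈ B)).card + N := by
      calc _ ≤ (((Finset.range n).filter (fun k => k ∈ B)) ∪ Finset.range N).card :=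
            Finset.card_le_card hsub
        _ ≤ _ := by
            simpa using Finset.card_union_le ((Finset.range n).filter (fun k => k ∈ B))
              (Finset.range N)
    rw [← add_div, div_le_div_iff_of_pos_right (by exact_mod_cast hn)]
    exact_mod_cast hcard
  have hub : Filter.Tendsto
      (fun n : ℕ => (((Finset.range n).filter (fun k => k ∈ B)).card : ℝ) / (n : ℝ) + (N : ℝ) / (n : ℝ))
      Filter.atTop (nhds 0) := by
    have := hB.add (tendsto_const_div_atTop_nhds_zero_nat (N : ℝ))
    simpa using this
  refine tendsto_of_tendsto_of_tendsto_of_le_of_le tendsto_const_nhds hub ?_ hle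
  intro n
  positivity

/-- If `p (x_n, y_n) → 0`, `x_n` is `r`-statistically convergent to `x`, and the
self-distances `p (x_n, x_n) → 0`, then `y_n` is `r`-statistically convergent to `x`. -/
theorem rStatLimit_transfer
    {X : Type*} [Nonempty X] (p : X → X → ℝ) (hp : IsPartialMetric p)
    (x y : ℕ → X)
    (hxy : Filter.Tendsto (fun n : ℕ => p (x n) (y n)) Filter.atTop (nhds 0))
    (l : X) (r : ℝ) (hr : 0 ≤ r) (hx : RStatLimit p x r l)
    (hselfx : Filter.Tendsto (fun n : ℕ => p (x n) (x n)) Filter.atTop (nhds 0)) :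
    RStatLimit p y r l := by
  intro ε hε
  -- |p(y n) l - p(x n) l| ≤ p(x n)(y n) for all n
  have key : ∀ n, |p (y n) l - p (x n) l| ≤ p (x n) (y n) := by
    intro n
    rw [abs_le]
    constructor
    · have t1 := hp.triangle (x n) l (y n)
      have s1 := hp.self_le (y n) (x n)
      have sym1 := hp.symm (y n) (x n)
      have sym2 := hp.symm (y n) l
      have sym3 := hp.symm (l) (y n)
      nlinarith [hp.nonneg (y n) (y n)]
    · have t2 := hp.triangle (y n) l (x n)
      have sym := hp.symm (y n) (x n)
      nlinarith [hp.nonneg (x n) (x n), hp.self_le (x n) (x n)]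
  -- eventually p(x n)(y n) < ε/2
  have hev : ∀ᶠ n in Filter.atTop, p (x n) (y n) < ε / 2 := by
    have := hxy (Metric.ball_mem_nhds (0 : ℝ) (by linarith : (0:ℝ) < ε/2))
    filter_upwards [this] with n hn
    simp only [Set.mem_preimage, Metric.mem_ball, Real.dist_eq, sub_zero] at hn
    calc p (x n) (y n) ≤ |p (x n) (y n)| := le_abs_self _
      _ < ε / 2 := hn
  obtain ⟨N, hN⟩ := Filter.eventually_atTop.mp hev
  have hx2 := hx (ε / 2) (by linarith)
  refine density_zero_of_subset_union N ?_ hx2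
  intro n hn
  by_cases hnN : n < N
  · exact Or.inr hnN
  · left
    push_neg at hnN
    have h1 : p (x n) (y n) < ε / 2 := hN n hnN
    have h2 := key n
    have h3 : r + ε ≤ |p (y n) l - p l l| := hn
    have : |p (x n) l - p l l| ≥ |p (y n) l - p l l| - |p (y n) l - p (x n) l| := by
      have := abs_sub_abs_le_abs_sub (p (y n) l - p l l) (p (y n) l - p (x n) l)
      simp only [sub_sub_sub_cancel_left] at this
      linarith [abs_sub_comm (p (x n) l) (p l l)]
    show r + ε / 2 ≤ |p (x n) l - p l l|
    linarith
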